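/- The operator J commutes with every element of L^s_ℂ; equivalently, [J, L_{jk}] = 0, [J, Λ_{jk}] = 0, [J, V_j] = 0 and [J, A_j] = 0 for all indices j, k. -/

import Mathlib

namespace GG

attribute [local instance 100] LieRing.ofAssociativeRing

/-- Index set for the adapted coframe `v_{ij}`, `i ∈ {1,2}`, `j ∈ {0,…,s}`. -/
abbrev Idx (s : ℕ) := Fin 2 × Fin (s + 1)

/-- Linear-order encoding of the indices. -/
def enc {s : ℕ} (x : Idx s) : ℕ := x.2.1 * 2 + x.1.1

/-- The sign `(-1)^{#{a ∈ S | a < x}}` appearing in wedge/contraction with `v_x`. -/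
def sgn {s : ℕ} (S : Finset (Idx s)) (x : Idx s) : ℝ :=
  (-1 : ℝ) ^ (S.filter fun a => enc a < enc x).card

/-- The exterior algebra `⋀V` of the `2(s+1)`-dimensional real inner product space `V`,
modelled on its orthonormal basis of monomials indexed by subsets of the basis of `V`. -/
abbrev ExtV (s : ℕ) := EuclideanSpace ℝ (Finset (Idx s))

/-- Matrix of exterior multiplication by the basis vector `v_x` on basis monomials. -/
def Emat {s : ℕ} (x : Idx s) : Matrix (Finset (Idx s)) (Finset (Idx s)) ℝ :=
  Matrix.of fun T S => if x ∉ S ∧ T = insert x S then sgn S x else 0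

/-- Matrix of contraction with `∂/∂v_x` on basis monomials. -/
def Imat {s : ℕ} (x : Idx s) : Matrix (Finset (Idx s)) (Finset (Idx s)) ℝ :=
  Matrix.of fun T S => if x ∈ S ∧ T = S.erase x then sgn S x else 0

/-- The wedge operator `E_{ij}` on `⋀V`. -/
noncomputable def Eop {s : ℕ} (x : Idx s) : Module.End ℝ (ExtV s) :=
  Matrix.toEuclideanLin (Emat x)

/-- The contraction operator `I_{ij}` on `⋀V`. -/
noncomputable def Iop {s : ℕ} (x : Idx s) : Module.End ℝ (ExtV s) :=
  Matrix.toEuclideanLin (Imat x)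

/-- The complexification `⋀_ℂ V` of `⋀V`. -/
abbrev ExtVC (s : ℕ) := EuclideanSpace ℂ (Finset (Idx s))

/-- The ℂ-linear extension of the wedge operator `E_{ij}`. -/
noncomputable def EopC {s : ℕ} (x : Idx s) : Module.End ℂ (ExtVC s) :=
  Matrix.toEuclideanLin ((Emat x).map Complex.ofReal)

/-- The ℂ-linear extension of the contraction operator `I_{ij}`. -/
noncomputable def IopC {s : ℕ} (x : Idx s) : Module.End ℂ (ExtVC s) :=
  Matrix.toEuclideanLin ((Imat x).map Complex.ofReal)

/-- `L_{jk} = Σ_i E_{ij}∘E_{ik}` on `⋀_ℂ V`. -/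
noncomputable def LCop {s : ℕ} (j k : Fin (s + 1)) : Module.End ℂ (ExtVC s) :=
  ∑ i : Fin 2, EopC (i, j) * EopC (i, k)

/-- `Λ_{jk} = Σ_i I_{ik}∘I_{ij}` on `⋀_ℂ V`. -/
noncomputable def LamC {s : ℕ} (j k : Fin (s + 1)) : Module.End ℂ (ExtVC s) :=
  ∑ i : Fin 2, IopC (i, k) * IopC (i, j)

/-- `V_j = E_{1j}∘E_{2j}` on `⋀_ℂ V`. -/
noncomputable def VopC {s : ℕ} (j : Fin (s + 1)) : Module.End ℂ (ExtVC s) :=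
  EopC (0, j) * EopC (1, j)

/-- `A_j = I_{2j}∘I_{1j}` on `⋀_ℂ V`. -/
noncomputable def AopC {s : ℕ} (j : Fin (s + 1)) : Module.End ℂ (ExtVC s) :=
  IopC (1, j) * IopC (0, j)

/-- `J = Σ_j (E_{2j}∘I_{1j} − E_{1j}∘I_{2j})` on `⋀_ℂ V`. -/
noncomputable def JC (s : ℕ) : Module.End ℂ (ExtVC s) :=
  ∑ j : Fin (s + 1), (EopC (1, j) * IopC (0, j) - EopC (0, j) * IopC (1, j))

/-- The generators `{L_{jk}, Λ_{jk}, V_j, A_j}` of `L^s_ℂ`. -/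
def gensC (s : ℕ) : Set (Module.End ℂ (ExtVC s)) :=
  {f | (∃ j k : Fin (s + 1), f = LCop j k ∨ f = LamC j k) ∨
    (∃ j : Fin (s + 1), f = VopC j ∨ f = AopC j)}

/-- The complex Lie algebra `L^s_ℂ ⊆ End_ℂ(⋀_ℂ V)`. -/
noncomputable def LsC (s : ℕ) : LieSubalgebra ℂ (Module.End ℂ (ExtVC s)) :=
  LieSubalgebra.lieSpan ℂ _ (gensC s)

section Aux

variable {s : ℕ}

lemma enc_inj : Function.Injective (enc (s := s)) := by
  rintro ⟨i, j⟩ ⟨i', j'⟩ h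
  simp only [enc] at h
  have hi := i.isLt; have hi' := i'.isLt
  have h1 : i.1 = i'.1 ∧ j.1 = j'.1 := by omega
  simp [Prod.ext_iff, Fin.ext_iff, h1.1, h1.2]

lemma sgn_sq (S : Finset (Idx s)) (x : Idx s) : sgn S x * sgn S x = 1 := by
  unfold sgn; rw [← pow_add]; exact Even.neg_one_pow ⟨_, rfl⟩

lemma sgn_insert (x : Idx s) {y : Idx s} {S : Finset (Idx s)} (h : y ∉ S) :
    sgn (insert y S) x = (if enc y < enc x then (-1 : ℝ) else 1) * sgn S x := by
  unfold sgn
  rw [Finset.filter_insert]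
  by_cases hlt : enc y < enc x
  · rw [if_pos hlt, if_pos hlt,
      Finset.card_insert_of_notMem (fun hc => h (Finset.mem_filter.mp hc).1), pow_succ,
      mul_comm]
  · rw [if_neg hlt, if_neg hlt, one_mul]

lemma mul_helper {n : Type*} [Fintype n] [DecidableEq n]
    (pA pB : n → Prop) [DecidablePred pA] [DecidablePred pB]
    (gA gB : n → n) (vA vB : n → ℝ) :
    (Matrix.of fun T S => if pA S ∧ T = gA S then vA S else 0) *
      (Matrix.of fun T S => if pB S ∧ T = gB S then vB S else 0) =
    Matrix.of fun T S =>
      if pB S ∧ pA (gB S) ∧ T = gA (gB S) then vA (gB S) * vB S else 0 := by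
  ext T S
  rw [Matrix.mul_apply, Finset.sum_eq_single (gB S)]
  · by_cases hB : pB S <;> by_cases hA : pA (gB S) <;>
      by_cases hT : T = gA (gB S) <;> simp [hA, hB, hT]
  · intro b _ hb; simp [hb]
  · simp

lemma Emat_mul_Emat (x y : Idx s) : Emat x * Emat y = Matrix.of fun T S =>
    if y ∉ S ∧ x ∉ insert y S ∧ T = insert x (insert y S)
      then sgn (insert y S) x * sgn S y else 0 :=
  mul_helper _ _ _ _ _ _

lemma Imat_mul_Imat (x y : Idx s) : Imat x * Imat y = Matrix.of fun T S =>
    if y ∈ S ∧ x ∈ S.erase y ∧ T = (S.erase y).erase x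
      then sgn (S.erase y) x * sgn S y else 0 :=
  mul_helper _ _ _ _ _ _

lemma Emat_mul_Imat (x y : Idx s) : Emat x * Imat y = Matrix.of fun T S =>
    if y ∈ S ∧ x ∉ S.erase y ∧ T = insert x (S.erase y)
      then sgn (S.erase y) x * sgn S y else 0 :=
  mul_helper _ _ _ _ _ _

lemma Imat_mul_Emat (x y : Idx s) : Imat y * Emat x = Matrix.of fun T S =>
    if x ∉ S ∧ y ∈ insert x S ∧ T = (insert x S).erase y
      then sgn (insert x S) y * sgn S x else 0 :=
  mul_helper _ _ _ _ _ _

lemma Emat_sq (x : Idx s) : Emat x * Emat x = 0 := by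
  rw [Emat_mul_Emat]; ext T S; simp

lemma Imat_sq (x : Idx s) : Imat x * Imat x = 0 := by
  rw [Imat_mul_Imat]; ext T S; simp

lemma Emat_anticomm (x y : Idx s) : Emat x * Emat y + Emat y * Emat x = 0 := by
  rcases eq_or_ne x y with rfl | hxy
  · rw [Emat_sq]; simp
  · have hexy : enc x ≠ enc y := fun h => hxy (enc_inj h)
    rw [Emat_mul_Emat, Emat_mul_Emat]
    ext T S
    simp only [Matrix.add_apply, Matrix.of_apply, Matrix.zero_apply]
    by_cases hy : y ∈ S
    · have h1 : y ∈ insert x S := Finset.mem_insert_of_mem hy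
      simp [hy, h1]
    by_cases hx : x ∈ S
    · have h1 : x ∈ insert y S := Finset.mem_insert_of_mem hx
      simp [hx, h1]
    have hxiy : x ∉ insert y S := by simp [Finset.mem_insert, hx, hxy]
    have hyix : y ∉ insert x S := by
      simp only [Finset.mem_insert, not_or]; exact ⟨Ne.symm hxy, hy⟩
    by_cases hT : T = insert x (insert y S)
    · have hT' : T = insert y (insert x S) := by rw [hT, Finset.insert_comm]
      rw [if_pos ⟨hy, hxiy, hT⟩, if_pos ⟨hx, hyix, hT'⟩,
        sgn_insert x hy, sgn_insert y hx]
      rcases hexy.lt_or_gt with h | h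
      · have hn : ¬ enc y < enc x := by omega
        rw [if_neg hn, if_pos h]; ring
      · have hn : ¬ enc x < enc y := by omega
        rw [if_pos h, if_neg hn]; ring
    · have hT' : T ≠ insert y (insert x S) := by
        rw [Finset.insert_comm]; exact hT
      rw [if_neg (fun h => hT h.2.2), if_neg (fun h => hT' h.2.2), add_zero]

lemma Imat_anticomm (x y : Idx s) : Imat x * Imat y + Imat y * Imat x = 0 := by
  rcases eq_or_ne x y with rfl | hxy
  · rw [Imat_sq]; simp
  · have hexy : enc x ≠ enc y := fun h => hxy (enc_inj h)
    rw [Imat_mul_Imat, Imat_mul_Imat]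
    ext T S
    simp only [Matrix.add_apply, Matrix.of_apply, Matrix.zero_apply]
    by_cases hy : y ∈ S
    case neg =>
      have h1 : y ∉ S.erase x := fun h => hy (Finset.mem_erase.mp h).2
      rw [if_neg (fun h => hy h.1), if_neg (fun h => h1 h.2.1), add_zero]
    by_cases hx : x ∈ S
    case neg =>
      have h1 : x ∉ S.erase y := fun h => hx (Finset.mem_erase.mp h).2
      rw [if_neg (fun h => h1 h.2.1), if_neg (fun h => hx h.1), add_zero]
    have hxey : x ∈ S.erase y := Finset.mem_erase.mpr ⟨hxy, hx⟩
    have hyex : y ∈ S.erase x := Finset.mem_erase.mpr ⟨fun h => hxy h.symm, hy⟩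
    have hDx : sgn S x = (if enc y < enc x then (-1:ℝ) else 1) * sgn (S.erase y) x := by
      conv_lhs => rw [← Finset.insert_erase hy]
      exact sgn_insert x (Finset.notMem_erase y S)
    have hDy : sgn S y = (if enc x < enc y then (-1:ℝ) else 1) * sgn (S.erase x) y := by
      conv_lhs => rw [← Finset.insert_erase hx]
      exact sgn_insert y (Finset.notMem_erase x S)
    by_cases hT : T = (S.erase y).erase x
    · have hT' : T = (S.erase x).erase y := by rw [hT, Finset.erase_right_comm]
      rw [if_pos ⟨hy, hxey, hT⟩, if_pos ⟨hx, hyex, hT'⟩, hDx, hDy]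
      rcases hexy.lt_or_gt with h | h
      · have hn : ¬ enc y < enc x := by omega
        rw [if_neg hn, if_pos h]; ring
      · have hn : ¬ enc x < enc y := by omega
        rw [if_pos h, if_neg hn]; ring
    · have hT' : T ≠ (S.erase x).erase y := by
        rw [Finset.erase_right_comm]; exact hT
      rw [if_neg (fun h => hT h.2.2), if_neg (fun h => hT' h.2.2), add_zero]

lemma EI_anticomm (x y : Idx s) :
    Emat x * Imat y + Imat y * Emat x = if x = y then 1 else 0 := by
  rcases eq_or_ne x y with rfl | hxy
  · rw [Emat_mul_Imat, Imat_mul_Emat, if_pos rfl]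
    ext T S
    simp only [Matrix.add_apply, Matrix.of_apply, Matrix.one_apply]
    by_cases hx : x ∈ S
    · have h1 : x ∉ S.erase x := Finset.notMem_erase x S
      have h2 : insert x (S.erase x) = S := Finset.insert_erase hx
      have h3 : sgn (S.erase x) x = sgn S x := by
        conv_rhs => rw [← h2, sgn_insert x h1, if_neg (lt_irrefl _), one_mul]
      by_cases hT : T = S
      · rw [if_pos ⟨hx, h1, by rw [h2, hT]⟩, if_neg (fun h => h.1 hx), if_pos hT,
          h3, sgn_sq, add_zero]
      · rw [if_neg (fun h => hT (by rw [h.2.2, h2])), if_neg (fun h => h.1 hx),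
          if_neg hT, add_zero]
    · have h1 : x ∈ insert x S := Finset.mem_insert_self x S
      have h2 : (insert x S).erase x = S := Finset.erase_insert hx
      have h3 : sgn (insert x S) x = sgn S x := by
        rw [sgn_insert x hx, if_neg (lt_irrefl _), one_mul]
      by_cases hT : T = S
      · rw [if_neg (fun h => hx h.1), if_pos ⟨hx, h1, by rw [h2, hT]⟩, if_pos hT,
          h3, sgn_sq, zero_add]
      · rw [if_neg (fun h => hx h.1), if_neg (fun h => hT (by rw [h.2.2, h2])),
          if_neg hT, add_zero]
  · have hexy : enc x ≠ enc y := fun h => hxy (enc_inj h)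
    rw [Emat_mul_Imat, Imat_mul_Emat, if_neg hxy]
    ext T S
    simp only [Matrix.add_apply, Matrix.of_apply, Matrix.zero_apply]
    by_cases hy : y ∈ S
    case neg =>
      have h1 : y ∉ insert x S := by
        simp only [Finset.mem_insert, not_or]; exact ⟨Ne.symm hxy, hy⟩
      rw [if_neg (fun h => hy h.1), if_neg (fun h => h1 h.2.1), add_zero]
    by_cases hx : x ∈ S
    case pos =>
      have h1 : x ∈ S.erase y := Finset.mem_erase.mpr ⟨hxy, hx⟩
      rw [if_neg (fun h => h.2.1 h1), if_neg (fun h => h.1 hx), add_zero]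
    have h1 : x ∉ S.erase y := fun h => hx (Finset.mem_erase.mp h).2
    have h2 : y ∈ insert x S := Finset.mem_insert_of_mem hy
    have h3 : (insert x S).erase y = insert x (S.erase y) :=
      Finset.erase_insert_of_ne hxy
    have hDx : sgn S x = (if enc y < enc x then (-1:ℝ) else 1) * sgn (S.erase y) x := by
      conv_lhs => rw [← Finset.insert_erase hy]
      exact sgn_insert x (Finset.notMem_erase y S)
    have hDy : sgn (insert x S) y = (if enc x < enc y then (-1:ℝ) else 1) * sgn S y :=
      sgn_insert y hx
    by_cases hT : T = insert x (S.erase y)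
    · rw [if_pos ⟨hy, h1, hT⟩, if_pos ⟨hx, h2, by rw [h3, hT]⟩, hDx, hDy]
      rcases hexy.lt_or_gt with h | h
      · have hn : ¬ enc y < enc x := by omega
        rw [if_neg hn, if_pos h]; ring
      · have hn : ¬ enc x < enc y := by omega
        rw [if_pos h, if_neg hn]; ring
    · rw [if_neg (fun h => hT h.2.2), if_neg (fun h => hT (by rw [← h3, h.2.2])),
        add_zero]

-- complexification helper
noncomputable def toC {s : ℕ} (A : Matrix (Finset (Idx s)) (Finset (Idx s)) ℝ) :
    Module.End ℂ (ExtVC s) :=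
  Matrix.toEuclideanLin (A.map Complex.ofReal)

lemma toEuclideanLin_mul {n : Type*} [Fintype n] [DecidableEq n]
    (A B : Matrix n n ℂ) :
    Matrix.toEuclideanLin (A * B) =
      Matrix.toEuclideanLin A * Matrix.toEuclideanLin B := by
  apply LinearMap.ext; intro v
  simp [Matrix.toEuclideanLin_apply, Module.End.mul_apply]

lemma map_ofReal_mul (A B : Matrix (Finset (Idx s)) (Finset (Idx s)) ℝ) :
    (A * B).map Complex.ofReal = A.map Complex.ofReal * B.map Complex.ofReal := by
  exact Matrix.map_mul (L := A) (M := B) (f := Complex.ofRealHom)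

lemma toC_mul (A B : Matrix (Finset (Idx s)) (Finset (Idx s)) ℝ) :
    toC (A * B) = toC A * toC B := by
  unfold toC; rw [map_ofReal_mul, toEuclideanLin_mul]

lemma toC_add (A B : Matrix (Finset (Idx s)) (Finset (Idx s)) ℝ) :
    toC (A + B) = toC A + toC B := by
  unfold toC
  rw [Matrix.map_add Complex.ofReal (by simp), map_add]

lemma toC_zero : toC (0 : Matrix (Finset (Idx s)) (Finset (Idx s)) ℝ) = 0 := by
  unfold toC
  rw [show (0 : Matrix (Finset (Idx s)) (Finset (Idx s)) ℝ).map Complex.ofReal = 0 by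
    ext; simp, map_zero]

lemma toC_one : toC (1 : Matrix (Finset (Idx s)) (Finset (Idx s)) ℝ) = 1 := by
  unfold toC
  rw [Matrix.map_one Complex.ofReal (by simp) (by simp)]
  apply LinearMap.ext; intro v
  simp [Matrix.toEuclideanLin_apply, Module.End.one_apply, Matrix.one_mulVec]

lemma EopC_eq (x : Idx s) : EopC x = toC (Emat x) := rfl
lemma IopC_eq (x : Idx s) : IopC x = toC (Imat x) := rfl

-- operator-level CAR
lemma EsqC (x : Idx s) : EopC x * EopC x = 0 := by
  rw [EopC_eq, ← toC_mul, Emat_sq, toC_zero]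

lemma IsqC (x : Idx s) : IopC x * IopC x = 0 := by
  rw [IopC_eq, ← toC_mul, Imat_sq, toC_zero]

lemma EEC (x y : Idx s) : EopC y * EopC x = -(EopC x * EopC y) := by
  have h : EopC x * EopC y + EopC y * EopC x = 0 := by
    rw [EopC_eq x, EopC_eq y, ← toC_mul, ← toC_mul, ← toC_add, Emat_anticomm, toC_zero]
  exact eq_neg_of_add_eq_zero_right h

lemma IIC (x y : Idx s) : IopC y * IopC x = -(IopC x * IopC y) := by
  have h : IopC x * IopC y + IopC y * IopC x = 0 := by
    rw [IopC_eq x, IopC_eq y, ← toC_mul, ← toC_mul, ← toC_add, Imat_anticomm, toC_zero]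
  exact eq_neg_of_add_eq_zero_right h

lemma EIC (x y : Idx s) :
    EopC x * IopC y + IopC y * EopC x = if x = y then 1 else 0 := by
  rw [EopC_eq, IopC_eq, ← toC_mul, ← toC_mul, ← toC_add, EI_anticomm]
  split <;> simp [toC_one, toC_zero]

section brackets
variable {R : Type*} [Ring R]

lemma sum_lie' {ι : Type*} (t : Finset ι) (f : ι → R) (g : R) :
    ⁅∑ i ∈ t, f i, g⁆ = ∑ i ∈ t, ⁅f i, g⁆ := by
  simp only [Ring.lie_def, Finset.sum_mul, Finset.mul_sum, Finset.sum_sub_distrib]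

lemma lie_mul' (x a b : R) : ⁅x, a * b⁆ = ⁅x, a⁆ * b + a * ⁅x, b⁆ := by
  simp only [Ring.lie_def]; noncomm_ring

end brackets

lemma IEC (x y : Idx s) :
    IopC y * EopC x = (if x = y then 1 else 0) - EopC x * IopC y :=
  eq_sub_of_add_eq' (EIC x y)

lemma lie_EI_E (a b c : Idx s) :
    ⁅EopC a * IopC b, EopC c⁆ = if b = c then EopC a else 0 := by
  rw [Ring.lie_def, mul_assoc, IEC c b, mul_sub]
  have h : EopC c * (EopC a * IopC b) = -(EopC a * (EopC c * IopC b)) := by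
    rw [← mul_assoc, EEC a c, neg_mul, mul_assoc]
  rw [h, sub_neg_eq_add, sub_add_cancel, mul_ite, mul_one, mul_zero]
  simp [eq_comm]

lemma lie_EI_I (a b c : Idx s) :
    ⁅EopC a * IopC b, IopC c⁆ = -(if a = c then IopC b else 0) := by
  rw [Ring.lie_def, ← mul_assoc, IEC a c, sub_mul, mul_assoc, mul_assoc, IIC b c,
    mul_neg]
  rw [ite_mul, one_mul, zero_mul]
  abel

lemma lie_J_E0 (j : Fin (s + 1)) : ⁅JC s, EopC ((0 : Fin 2), j)⁆ = EopC (1, j) := by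
  rw [JC, sum_lie']
  simp only [sub_lie, lie_EI_E, Prod.mk.injEq]
  norm_num

lemma lie_J_E1 (j : Fin (s + 1)) : ⁅JC s, EopC ((1 : Fin 2), j)⁆ = -EopC (0, j) := by
  rw [JC, sum_lie']
  simp only [sub_lie, lie_EI_E, Prod.mk.injEq]
  norm_num

lemma lie_J_I0 (j : Fin (s + 1)) : ⁅JC s, IopC ((0 : Fin 2), j)⁆ = IopC (1, j) := by
  rw [JC, sum_lie']
  simp only [sub_lie, lie_EI_I, Prod.mk.injEq]
  norm_num

lemma lie_J_I1 (j : Fin (s + 1)) : ⁅JC s, IopC ((1 : Fin 2), j)⁆ = -IopC (0, j) := by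
  rw [JC, sum_lie']
  simp only [sub_lie, lie_EI_I, Prod.mk.injEq]
  norm_num

lemma lie_J_LC (j k : Fin (s + 1)) : ⁅JC s, LCop (s := s) j k⁆ = 0 := by
  rw [LCop, Fin.sum_univ_two, lie_add, lie_mul', lie_mul', lie_J_E0, lie_J_E0,
    lie_J_E1, lie_J_E1]
  noncomm_ring

lemma lie_J_Lam (j k : Fin (s + 1)) : ⁅JC s, LamC (s := s) j k⁆ = 0 := by
  rw [LamC, Fin.sum_univ_two, lie_add, lie_mul', lie_mul', lie_J_I0, lie_J_I0,
    lie_J_I1, lie_J_I1]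
  noncomm_ring

lemma lie_J_V (j : Fin (s + 1)) : ⁅JC s, VopC (s := s) j⁆ = 0 := by
  rw [VopC, lie_mul', lie_J_E0, lie_J_E1]
  rw [mul_neg, EsqC, EsqC]
  simp

lemma lie_J_A (j : Fin (s + 1)) : ⁅JC s, AopC (s := s) j⁆ = 0 := by
  rw [AopC, lie_mul', lie_J_I0, lie_J_I1]
  rw [neg_mul, IsqC, IsqC]
  simp

end Aux

theorem statement_8 (s : ℕ) (hs : 2 ≤ s) :
    (∀ f ∈ LsC s, ⁅JC s, f⁆ = 0) ∧
    (∀ j k : Fin (s + 1), ⁅JC s, LCop (s := s) j k⁆ = 0 ∧ ⁅JC s, LamC (s := s) j k⁆ = 0) ∧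
    (∀ j : Fin (s + 1), ⁅JC s, VopC (s := s) j⁆ = 0 ∧ ⁅JC s, AopC (s := s) j⁆ = 0) := by
  have hL : ∀ j k : Fin (s + 1), ⁅JC s, LCop (s := s) j k⁆ = 0 := lie_J_LC
  have hLam : ∀ j k : Fin (s + 1), ⁅JC s, LamC (s := s) j k⁆ = 0 := lie_J_Lam
  have hV : ∀ j : Fin (s + 1), ⁅JC s, VopC (s := s) j⁆ = 0 := lie_J_V
  have hA : ∀ j : Fin (s + 1), ⁅JC s, AopC (s := s) j⁆ = 0 := lie_J_A
  refine ⟨?_, fun j k => ⟨hL j k, hLam j k⟩, fun j => ⟨hV j, hA j⟩⟩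
  let K : LieSubalgebra ℂ (Module.End ℂ (ExtVC s)) :=
    { carrier := {f | ⁅JC s, f⁆ = 0}
      add_mem' := fun {a b} ha hb => by
        simp only [Set.mem_setOf_eq, lie_add] at *
        rw [ha, hb, add_zero]
      zero_mem' := by simp
      smul_mem' := fun c a ha => by
        simp only [Set.mem_setOf_eq, lie_smul] at *
        rw [ha, smul_zero]
      lie_mem' := fun {a b} ha hb => by
        simp only [Set.mem_setOf_eq] at *
        rw [leibniz_lie, ha, hb]
        simp }
  intro f hf
  have hsub : gensC s ⊆ ↑K := by
    rintro g (⟨j, k, (rfl | rfl)⟩ | ⟨j, (rfl | rfl)⟩)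
    · exact hL j k
    · exact hLam j k
    · exact hV j
    · exact hA j
  have hle : LsC s ≤ K := LieSubalgebra.lieSpan_le.mpr hsub
  exact hle hf

end GG
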